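/- Let f ∈ L²(ℝⁿ) with |x|^m f ∈ L²(ℝⁿ) where m = ⌊n/2⌋ + 1, let 1 ≤ j ≤ m, and let 2 < p < 2n/(n−2j) (interpreted as 2 < p < ∞ if n ≤ 2j). Then with p′ the conjugate exponent, ‖ |x|^{m−j} f ‖_{L^{p′}} ≲ ‖f‖_{L²} + ‖ |x|^m f ‖_{L²}, with implicit constant depending only on n, j, p. -/

import Mathlib

open MeasureTheory

theorem weighted_holder_bound (n j : ℕ) (p p' : ℝ)
    (hn : 1 ≤ n) (hj1 : 1 ≤ j) (hjm : j ≤ n / 2 + 1)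
    (hp2 : 2 < p) (hpn : 2 * j < n → p < 2 * n / (n - 2 * j))
    (hp' : 1 / p + 1 / p' = 1) :
    ∃ C : ℝ, 0 < C ∧
      ∀ f : EuclideanSpace ℝ (Fin n) → ℂ,
        MemLp f 2 volume →
        MemLp (fun x => ‖x‖ ^ (n / 2 + 1) • f x) 2 volume →
        eLpNorm (fun x => ‖x‖ ^ (n / 2 + 1 - j) • f x) (ENNReal.ofReal p') volume
          ≤ ENNReal.ofReal C *
            (eLpNorm f 2 volume +
              eLpNorm (fun x => ‖x‖ ^ (n / 2 + 1) • f x) 2 volume) := by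
  set m : ℕ := n / 2 + 1 with hm
  set E := EuclideanSpace ℝ (Fin n)
  -- real exponent arithmetic
  have hp0 : (0:ℝ) < p := by linarith
  have hip : (0:ℝ) < 1/p := by positivity
  have hip2 : 1/p < 1/2 := by rw [div_lt_div_iff₀ hp0 two_pos]; linarith
  have hip' : 1/p' = 1 - 1/p := by linarith
  have hip'pos : 0 < 1/p' := by rw [hip']; linarith
  have hp'pos : 0 < p' := by
    by_contra h; push_neg at h
    have : 1/p' ≤ 0 := one_div_nonpos.mpr h
    linarith
  have hp'gt1 : 1 < p' := by
    have h1 : 1/p' < 1 := by rw [hip']; linarith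
    exact (div_lt_one hp'pos).mp h1
  set qt : ℝ := 2*p/(p-2) with hqt
  have hpm2 : (0:ℝ) < p - 2 := by linarith
  have hqtpos : 0 < qt := by positivity
  have hiqt : 1/qt = 1/2 - 1/p := by rw [hqt]; field_simp
  have hiq' : 1/qt + 1/2 = 1/p' := by rw [hiqt, hip']; ring
  -- n < j * qt
  have hnjq : (n:ℝ) < j * qt := by
    by_cases h : 2 * j < n
    · have hpn' := hpn h
      have hcast : (0:ℝ) < (n : ℝ) - 2*j := by
        have := (Nat.cast_lt (α := ℝ)).mpr h; push_cast at this ⊢; linarith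
      have h2 : p * ((n:ℝ) - 2*j) < 2*n := by
        calc p * ((n:ℝ) - 2*j) < (2*n/((n:ℝ)-2*j)) * ((n:ℝ)-2*j) :=
              mul_lt_mul_of_pos_right hpn' hcast
          _ = 2*n := by field_simp
      rw [hqt, mul_div_assoc', lt_div_iff₀ hpm2]
      nlinarith
    · push_neg at h
      have hj' : (1:ℝ) ≤ j := by exact_mod_cast hj1
      have hn2j : (n:ℝ) ≤ 2*j := by exact_mod_cast h
      have hqt2 : 2 < qt := by rw [hqt, lt_div_iff₀ hpm2]; linarith
      nlinarith
  -- ENNReal exponents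
  set P' : ENNReal := ENNReal.ofReal p' with hP'
  set Q : ENNReal := ENNReal.ofReal qt with hQ
  have hP'1 : 1 ≤ P' := by
    rw [hP', ← ENNReal.ofReal_one]; exact ENNReal.ofReal_le_ofReal hp'gt1.le
  have hQ0 : Q ≠ 0 := by simp [hQ, ENNReal.ofReal_eq_zero, not_le, hqtpos]
  have hQtop : Q ≠ ⊤ := ENNReal.ofReal_ne_top
  have hHolder : 1/P' = 1/Q + 1/(2:ENNReal) := by
    rw [hP', hQ, one_div, one_div, one_div, ← ENNReal.ofReal_inv_of_pos hp'pos,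
      ← ENNReal.ofReal_inv_of_pos hqtpos,
      show (2:ENNReal) = ENNReal.ofReal 2 by norm_num,
      ← ENNReal.ofReal_inv_of_pos two_pos,
      ← ENNReal.ofReal_add (by positivity) (by positivity)]
    congr 1
    have := hiq'
    rw [one_div, one_div, one_div] at this
    linarith
  -- the two weight functions
  set B : Set E := Metric.closedBall 0 1 with hB
  have hBmeas : MeasurableSet B := measurableSet_closedBall
  set φ₁ : E → ℝ := B.indicator (fun _ => (1:ℝ)) with hφ₁
  set φ₂ : E → ℝ := Bᶜ.indicator (fun x => (‖x‖^j)⁻¹) with hφ₂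
  have hφ₁mem : MemLp φ₁ Q volume :=
    memLp_indicator_const Q hBmeas 1 (Or.inr measure_closedBall_lt_top.ne)
  have hφ₂meas : AEStronglyMeasurable φ₂ volume :=
    ((measurable_norm.pow_const j).inv.indicator hBmeas.compl).aestronglyMeasurable
  have hφ₂mem : MemLp φ₂ Q volume := by
    refine ⟨hφ₂meas, ?_⟩
    rw [eLpNorm_lt_top_iff_lintegral_rpow_enorm_lt_top hQ0 hQtop]
    set r : ℝ := j * qt with hr
    have hrpos : 0 < r := lt_of_le_of_lt (Nat.cast_nonneg n) hnjq
    have hint : Integrable (fun x : E => (2:ℝ)^r * (1 + ‖x‖) ^ (-r)) volume := by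
      refine (integrable_one_add_norm ?_).const_mul _
      rw [finrank_euclideanSpace_fin]; exact hnjq
    refine lt_of_le_of_lt (lintegral_mono fun x => ?_) hint.2
    rw [hQ, ENNReal.toReal_ofReal hqtpos.le]
    have key : ‖φ₂ x‖ ^ qt ≤ ‖(2:ℝ)^r * (1 + ‖x‖) ^ (-r)‖ := by
      rw [Real.norm_eq_abs (((2:ℝ)^r * (1 + ‖x‖) ^ (-r))), abs_of_nonneg (by positivity)]
      by_cases hx : x ∈ B
      · have h0 : φ₂ x = 0 := Set.indicator_of_notMem (by simpa using hx) _
        rw [h0, norm_zero, Real.zero_rpow hqtpos.ne']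
        positivity
      · have hx1 : 1 < ‖x‖ := by
          rw [hB, Metric.mem_closedBall, dist_zero_right] at hx; exact not_le.mp hx
        have hx0 : (0:ℝ) < ‖x‖ := by linarith
        have hval : φ₂ x = (‖x‖^j)⁻¹ := Set.indicator_of_mem (by simpa using hx) _
        rw [hval, Real.norm_eq_abs, abs_of_nonneg (by positivity)]
        have e1 : ((‖x‖^j)⁻¹ : ℝ) ^ qt = ‖x‖ ^ (-r) := by
          rw [← Real.rpow_natCast ‖x‖ j, ← Real.rpow_neg hx0.le,
            ← Real.rpow_mul hx0.le, neg_mul]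
        rw [e1]
        have h2 : (1+‖x‖)^r ≤ (2*‖x‖)^r := Real.rpow_le_rpow (by positivity) (by linarith) hrpos.le
        have h3 : ((2:ℝ)*‖x‖)^r = 2^r * ‖x‖^r := Real.mul_rpow (by norm_num) hx0.le
        have h4 : (0:ℝ) < (1+‖x‖)^r := Real.rpow_pos_of_pos (by positivity) r
        have h6 : (0:ℝ) < (2:ℝ)^r := Real.rpow_pos_of_pos two_pos r
        have h5 : (0:ℝ) < ‖x‖^r := Real.rpow_pos_of_pos hx0 r
        rw [Real.rpow_neg hx0.le, Real.rpow_neg (by positivity : (0:ℝ) ≤ 1+‖x‖)]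
        calc (‖x‖^r)⁻¹ = 2^r * ((2:ℝ)^r * ‖x‖^r)⁻¹ := by field_simp
          _ ≤ 2^r * ((1+‖x‖)^r)⁻¹ := by
              refine mul_le_mul_of_nonneg_left (inv_anti₀ h4 ?_) h6.le
              rw [← h3]; exact h2
    calc (‖φ₂ x‖₊ : ENNReal) ^ qt
        = ((‖φ₂ x‖₊ ^ qt : NNReal) : ENNReal) := by
          rw [← ENNReal.coe_rpow_of_nonneg _ hqtpos.le]
      _ ≤ (‖(2:ℝ)^r * (1 + ‖x‖) ^ (-r)‖₊ : ENNReal) := by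
          rw [ENNReal.coe_le_coe, ← NNReal.coe_le_coe, NNReal.coe_rpow, coe_nnnorm, coe_nnnorm]
          exact key
  -- the constant
  set C : ℝ := max (eLpNorm φ₁ Q volume).toReal (eLpNorm φ₂ Q volume).toReal + 1 with hC
  have hCpos : 0 < C := by
    have : (0:ℝ) ≤ max (eLpNorm φ₁ Q volume).toReal (eLpNorm φ₂ Q volume).toReal :=
      le_max_of_le_left ENNReal.toReal_nonneg
    linarith
  refine ⟨C, hCpos, fun f hf hf2 => ?_⟩
  set g : E → ℂ := fun x => ‖x‖ ^ (m - j) • f x with hg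
  set h : E → ℂ := fun x => ‖x‖ ^ m • f x with hh
  have hgmeas : AEStronglyMeasurable g volume :=
    ((measurable_norm.pow_const (m - j)).aestronglyMeasurable).smul hf.1
  -- split into the two pieces
  have hsplit : eLpNorm g P' volume ≤
      eLpNorm (B.indicator g) P' volume + eLpNorm (Bᶜ.indicator g) P' volume := by
    conv_lhs => rw [← Set.indicator_self_add_compl B g]
    exact eLpNorm_add_le (hgmeas.indicator hBmeas) (hgmeas.indicator hBmeas.compl) hP'1
  -- inner piece
  have hinner : eLpNorm (B.indicator g) P' volume ≤
      eLpNorm φ₁ Q volume * eLpNorm f 2 volume := by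
    have hmono : ∀ x, ‖B.indicator g x‖ ≤ ‖(φ₁ • f) x‖ := by
      intro x
      by_cases hx : x ∈ B
      · rw [Set.indicator_of_mem hx]
        have hφx : φ₁ x = 1 := Set.indicator_of_mem hx _
        have hx1 : ‖x‖ ≤ 1 := by rwa [hB, Metric.mem_closedBall, dist_zero_right] at hx
        simp only [Pi.smul_apply', hφx, one_smul, hg, norm_smul, norm_pow, norm_norm, Real.norm_of_nonneg (norm_nonneg x)]
        calc ‖x‖ ^ (m - j) * ‖f x‖ ≤ 1 * ‖f x‖ := by
              apply mul_le_mul_of_nonneg_right (pow_le_one₀ (norm_nonneg x) hx1) (norm_nonneg _)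
          _ = ‖f x‖ := one_mul _
      · rw [Set.indicator_of_notMem hx]
        simp only [norm_zero, Pi.smul_apply', norm_smul]
        positivity
    calc eLpNorm (B.indicator g) P' volume ≤ eLpNorm (φ₁ • f) P' volume :=
          eLpNorm_mono hmono
      _ ≤ eLpNorm φ₁ Q volume * eLpNorm f 2 volume :=
          eLpNorm_smul_le_mul_eLpNorm hf.1 hφ₁mem.1 (hpqr := ⟨by simpa only [one_div] using hHolder.symm⟩)
  -- outer piece
  have houtereq : Bᶜ.indicator g = φ₂ • h := by
    funext x
    by_cases hx : x ∈ B
    · rw [Set.indicator_of_notMem (by simpa using hx)]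
      have hφx : φ₂ x = 0 := Set.indicator_of_notMem (by simpa using hx) _
      simp [Pi.smul_apply', hφx]
    · have hx1 : 1 < ‖x‖ := by
        rw [hB, Metric.mem_closedBall, dist_zero_right] at hx; exact not_le.mp hx
      have hx0 : ‖x‖ ≠ 0 := by positivity
      rw [Set.indicator_of_mem (by simpa using hx)]
      have hφx : φ₂ x = (‖x‖^j)⁻¹ := Set.indicator_of_mem (by simpa using hx) _
      simp only [Pi.smul_apply', hφx, hg, hh, smul_smul]
      congr 1
      have : ‖x‖ ^ m = ‖x‖ ^ (m - j) * ‖x‖ ^ j := by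
        rw [← pow_add, Nat.sub_add_cancel hjm]
      rw [this]
      field_simp
  have houter : eLpNorm (Bᶜ.indicator g) P' volume ≤
      eLpNorm φ₂ Q volume * eLpNorm h 2 volume := by
    rw [houtereq]
    exact eLpNorm_smul_le_mul_eLpNorm hf2.1 hφ₂mem.1 (hpqr := ⟨by simpa only [one_div] using hHolder.symm⟩)
  -- bound the weight norms by C
  have hb1 : eLpNorm φ₁ Q volume ≤ ENNReal.ofReal C := by
    rw [← ENNReal.ofReal_toReal hφ₁mem.2.ne]
    exact ENNReal.ofReal_le_ofReal (by rw [hC]; have := le_max_left (eLpNorm φ₁ Q volume).toReal (eLpNorm φ₂ Q volume).toReal; linarith)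
  have hb2 : eLpNorm φ₂ Q volume ≤ ENNReal.ofReal C := by
    rw [← ENNReal.ofReal_toReal hφ₂mem.2.ne]
    exact ENNReal.ofReal_le_ofReal (by rw [hC]; have := le_max_right (eLpNorm φ₁ Q volume).toReal (eLpNorm φ₂ Q volume).toReal; linarith)
  calc eLpNorm g P' volume
      ≤ eLpNorm (B.indicator g) P' volume + eLpNorm (Bᶜ.indicator g) P' volume := hsplit
    _ ≤ eLpNorm φ₁ Q volume * eLpNorm f 2 volume + eLpNorm φ₂ Q volume * eLpNorm h 2 volume :=
        add_le_add hinner houter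
    _ ≤ ENNReal.ofReal C * eLpNorm f 2 volume + ENNReal.ofReal C * eLpNorm h 2 volume :=
        add_le_add (mul_le_mul_left hb1 _) (mul_le_mul_left hb2 _)
    _ = ENNReal.ofReal C * (eLpNorm f 2 volume + eLpNorm h 2 volume) := (mul_add _ _ _).symm
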